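/- Let φ > 0, δ ≥ 0, k₁ > 0, T > 0. Let x_i, v_i, x_p, v_p : [0, T] → ℝ be differentiable with x_i'(t) = v_i(t), x_p'(t) = v_p(t), and v_i'(t) = u_i(t) for some function u_i. If x_p(0) − x_i(0) − φ·v_i(0) − δ ≥ 0 and for all t ∈ [0, T]: v_p(t) − v_i(t) − φ·u_i(t) + k₁·(x_p(t) − x_i(t) − φ·v_i(t) − δ) ≥ 0, then x_p(t) − x_i(t) − φ·v_i(t) − δ ≥ 0 for all t ∈ [0, T]; i.e., the rear-end safety constraint z(t) ≥ φ·v_i(t) + δ holds for all t. -/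

import Mathlib

/-- Correctness of the CBF constraint for rear-end safety: if the rear-end
safety CBF condition L_f b₁ + (L_g b₁)·u_i + k₁·b₁ ≥ 0 holds along the
trajectory and b₁(0) ≥ 0, then b₁(t) ≥ 0 for all t ∈ [0,T]. -/
theorem stmt5 (φ δ k₁ T : ℝ) (hφ : 0 < φ) (hδ : 0 ≤ δ) (hk : 0 < k₁) (hT : 0 < T)
    (xi vi xp vp ui : ℝ → ℝ)
    (hxi : ∀ t ∈ Set.Icc (0:ℝ) T, HasDerivAt xi (vi t) t)
    (hxp : ∀ t ∈ Set.Icc (0:ℝ) T, HasDerivAt xp (vp t) t)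
    (hvi : ∀ t ∈ Set.Icc (0:ℝ) T, HasDerivAt vi (ui t) t)
    (hinit : 0 ≤ xp 0 - xi 0 - φ * vi 0 - δ)
    (hcbf : ∀ t ∈ Set.Icc (0:ℝ) T,
      0 ≤ vp t - vi t - φ * ui t + k₁ * (xp t - xi t - φ * vi t - δ)) :
    ∀ t ∈ Set.Icc (0:ℝ) T, 0 ≤ xp t - xi t - φ * vi t - δ := by
  set b : ℝ → ℝ := fun t => xp t - xi t - φ * vi t - δ with hb
  have hbd : ∀ t ∈ Set.Icc (0:ℝ) T,
      HasDerivAt b (vp t - vi t - φ * ui t) t := by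
    intro t ht
    have := (((hxp t ht).sub (hxi t ht)).sub ((hvi t ht).const_mul φ)).sub_const δ
    simpa [hb] using this
  set g : ℝ → ℝ := fun t => b t * Real.exp (k₁ * t) with hg
  have hgd : ∀ t ∈ Set.Icc (0:ℝ) T,
      HasDerivAt g ((vp t - vi t - φ * ui t + k₁ * b t) * Real.exp (k₁ * t)) t := by
    intro t ht
    have he : HasDerivAt (fun t => Real.exp (k₁ * t)) (k₁ * Real.exp (k₁ * t)) t := by
      simpa [mul_comm, Function.comp_def] using (Real.hasDerivAt_exp (k₁ * t)).comp t
        ((hasDerivAt_id t).const_mul k₁)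
    have := (hbd t ht).mul he
    simpa [hg, Pi.mul_def] using this.congr_deriv (by ring)
  have hmono : MonotoneOn g (Set.Icc 0 T) := by
    apply monotoneOn_of_deriv_nonneg (convex_Icc 0 T)
    · exact fun t ht => (hgd t ht).continuousAt.continuousWithinAt
    · intro t ht
      rw [interior_Icc] at ht
      exact (hgd t (Set.mem_Icc_of_Ioo ht)).differentiableAt.differentiableWithinAt
    · intro t ht
      rw [interior_Icc] at ht
      have ht' := Set.mem_Icc_of_Ioo ht
      rw [(hgd t ht').deriv]
      exact mul_nonneg (hcbf t ht') (Real.exp_pos _).le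
  intro t ht
  have h0 : (0:ℝ) ∈ Set.Icc (0:ℝ) T := Set.left_mem_Icc.2 hT.le
  have := hmono h0 ht ht.1
  have hg0 : 0 ≤ g 0 := mul_nonneg hinit (Real.exp_pos _).le
  have hgt : 0 ≤ g t := hg0.trans this
  have hbt : 0 ≤ b t :=
    (mul_nonneg_iff_of_pos_right (Real.exp_pos (k₁ * t))).mp hgt
  simpa [hb] using hbt
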